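/- Let K be an odd positive integer and let m be an odd integer with 1 ≤ m ≤ K. For l ∈ {0,…,K} define h(l) = (1/C(K,m)) · Σ_{j=(m+1)/2}^{m} C(l,j)·C(K−l, m−j), and define γ_Sub : {0,…,K} → ℝ by γ_Sub(l) = 1 − 2h(l) for l ≤ (K−1)/2 and γ_Sub(l) = 1 − 2h(K−l) for l ≥ (K+1)/2. Then for every l ∈ {0,…,K}, γ_Sub(l)·1{l ≥ (K+1)/2} + (1 − γ_Sub(l))/2 = h(l). (In particular γ_Sub(l) = γ_Sub(K−l) for all l, and hence data-dependent randomized response with noise function γ_Sub, which outputs the majority indicator 1{l ≥ (K+1)/2} with probability γ_Sub(l) and a fair coin otherwise, has exactly probability h(l) of outputting 1 conditioned on the sum of observed outcomes being l — the same as outputting the majority of m outcomes subsampled without replacement.) -/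

import Mathlib

open Finset

lemma vand_split (K l m t : ℕ) (hl : l ≤ K) (hmK : m ≤ K) (hmt : m = 2*t+1) :
    (∑ j ∈ Finset.Icc (t+1) m, l.choose j * (K-l).choose (m-j))
    + (∑ j ∈ Finset.Icc (t+1) m, (K-l).choose j * l.choose (m-j)) = K.choose m := by
  have h2 : (∑ j ∈ Finset.Icc (t+1) m, (K-l).choose j * l.choose (m-j))
      = ∑ j ∈ Finset.range (t+1), l.choose j * (K-l).choose (m-j) := by
    apply Finset.sum_nbij' (i := fun j => m - j) (j := fun j => m - j)
    · intro a ha; simp only [Finset.mem_Icc] at ha; simp only [Finset.mem_range]; omega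
    · intro a ha; simp only [Finset.mem_range] at ha; simp only [Finset.mem_Icc]; omega
    · intro a ha; simp only [Finset.mem_Icc] at ha; omega
    · intro a ha; simp only [Finset.mem_range] at ha; omega
    · intro a ha
      simp only [Finset.mem_Icc] at ha
      have : m - (m - a) = a := by omega
      rw [this, mul_comm]
  rw [h2, add_comm]
  have hK : K = l + (K - l) := by omega
  have hvan : K.choose m = ∑ j ∈ Finset.range (m+1), l.choose j * (K-l).choose (m-j) := by
    conv_lhs => rw [hK]
    rw [Nat.add_choose_eq, Finset.Nat.sum_antidiagonal_eq_sum_range_succ_mk]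
  have key : Finset.range (m+1) = Finset.range (t+1) ∪ Finset.Icc (t+1) m := by
    ext x; simp only [Finset.mem_union, Finset.mem_range, Finset.mem_Icc]; omega
  have hdisj : Disjoint (Finset.range (t+1)) (Finset.Icc (t+1) m) := by
    simp only [Finset.disjoint_left, Finset.mem_range, Finset.mem_Icc]
    omega
  rw [hvan, key, Finset.sum_union hdisj]

/-- For odd `K` and odd `m` with `1 ≤ m ≤ K`, the subsampling noise
function `γ_Sub` built from the hypergeometric majority probability `h` satisfies
`γ_Sub(l)·1{l ≥ (K+1)/2} + (1 − γ_Sub(l))/2 = h(l)` for all `0 ≤ l ≤ K`. -/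
theorem statement0 (K m : ℕ) (hK : Odd K) (hKpos : 0 < K)
    (hm : Odd m) (hm1 : 1 ≤ m) (hmK : m ≤ K)
    (h γSub : ℕ → ℝ)
    (hh : ∀ l, h l = (∑ j ∈ Finset.Icc ((m + 1) / 2) m,
        (l.choose j : ℝ) * ((K - l).choose (m - j) : ℝ)) / (K.choose m : ℝ))
    (hγlo : ∀ l, l ≤ (K - 1) / 2 → γSub l = 1 - 2 * h l)
    (hγhi : ∀ l, (K + 1) / 2 ≤ l → γSub l = 1 - 2 * h (K - l)) :
    ∀ l ≤ K, γSub l * (if (K + 1) / 2 ≤ l then (1 : ℝ) else 0)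
      + (1 - γSub l) / 2 = h l := by
  intro l hl
  obtain ⟨t, ht⟩ := hm
  have hm2 : (m + 1) / 2 = t + 1 := by omega
  have hC : (0 : ℝ) < (K.choose m : ℝ) := by
    exact_mod_cast Nat.choose_pos hmK
  by_cases hcase : (K + 1) / 2 ≤ l
  · -- symmetry: h l + h (K - l) = 1
    have hsym : h l + h (K - l) = 1 := by
      rw [hh l, hh (K - l), hm2]
      have hKl : K - (K - l) = l := by omega
      rw [hKl, ← add_div, div_eq_one_iff_eq (ne_of_gt hC)]
      have := vand_split K l m t hl hmK (by omega)
      push_cast [← this]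
      ring
    rw [if_pos hcase, hγhi l hcase]
    linarith
  · have hlo : l ≤ (K - 1) / 2 := by omega
    rw [if_neg hcase, hγlo l hlo]
    ring
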